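/- A formula φ is a theorem of the Hilbert system GLS if and only if the formula (⋀{□α→α : □α ∈ SF(φ)}) → φ, whose antecedent is the conjunction of all formulas □α→α with □α a subformula of φ, is a theorem of GL. -/

import Mathlib

/-- Modal formulas: propositional variables, ⊥, →, □. -/
inductive Formula : Type
  | var : ℕ → Formula
  | bot : Formula
  | imp : Formula → Formula → Formula
  | box : Formula → Formula
deriving DecidableEq

/-- Levels of sequents in GLS_seq: first level (⇒) and second level (⇛). -/
inductive SeqLevel : Type
  | one
  | two
deriving DecidableEq

/-- The set of subformulas of a formula. -/
def Formula.subf : Formula → Finset Formula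
  | .var p => {.var p}
  | .bot => {.bot}
  | .imp φ ψ => insert (.imp φ ψ) (φ.subf ∪ ψ.subf)
  | .box φ => insert (.box φ) φ.subf

/-- SF(Ψ,Φ): all subformulas of formulas in Ψ ∪ Φ. -/
def SF (Ψ Φ : Finset Formula) : Finset Formula := (Ψ ∪ Φ).biUnion Formula.subf

def Formula.isBox : Formula → Bool
  | .box _ => true
  | _ => false

def Formula.unbox : Formula → Formula
  | .box φ => φ
  | φ => φ

/-- Θ_□ = {φ : □φ ∈ Θ}. -/
def boxInv (Θ : Finset Formula) : Finset Formula :=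
  (Θ.filter fun ψ => ψ.isBox).image Formula.unbox

/-- The sequent calculus GLS_seq, on sequents of two levels.  The Bool parameter
records whether the cut rule may be used: `GLSSeq true` is provability in GLS_seq,
`GLSSeq false` is cut-free provability.  The first-level fragment is exactly GL_seq. -/
inductive GLSSeq : Bool → SeqLevel → Finset Formula → Finset Formula → Prop
  | init (c lv φ) : GLSSeq c lv {φ} {φ}
  | initBot (c lv) : GLSSeq c lv {Formula.bot} ∅
  | cut {lv Γ Δ} (φ) : GLSSeq true lv Γ (insert φ Δ) → GLSSeq true lv (insert φ Γ) Δ →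
      GLSSeq true lv Γ Δ
  | weak {c lv Γ Δ Γ' Δ'} : Γ ⊆ Γ' → Δ ⊆ Δ' → GLSSeq c lv Γ Δ → GLSSeq c lv Γ' Δ'
  | impL {c lv Γ Δ φ ψ} : GLSSeq c lv Γ (insert φ Δ) → GLSSeq c lv (insert ψ Γ) Δ →
      GLSSeq c lv (insert (.imp φ ψ) Γ) Δ
  | impR {c lv Γ Δ φ ψ} : GLSSeq c lv (insert φ Γ) (insert ψ Δ) →
      GLSSeq c lv Γ (insert (.imp φ ψ) Δ)
  | boxGL {c Γ φ} : GLSSeq c .one (Γ ∪ Γ.image .box ∪ {.box φ}) {φ} →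
      GLSSeq c .one (Γ.image .box) {.box φ}
  | boxL {c Γ Δ} (φ) : GLSSeq c .two (insert φ Γ) Δ → GLSSeq c .two (insert (.box φ) Γ) Δ
  | lift {c Γ Δ} : GLSSeq c .one Γ Δ → GLSSeq c .two Γ Δ

/-- The sequent calculus GL_seq (on first-level sequents only). -/
inductive GLSeq : Bool → Finset Formula → Finset Formula → Prop
  | init (c φ) : GLSeq c {φ} {φ}
  | initBot (c) : GLSeq c {Formula.bot} ∅
  | cut {Γ Δ} (φ) : GLSeq true Γ (insert φ Δ) → GLSeq true (insert φ Γ) Δ → GLSeq true Γ Δ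
  | weak {c Γ Δ Γ' Δ'} : Γ ⊆ Γ' → Δ ⊆ Δ' → GLSeq c Γ Δ → GLSeq c Γ' Δ'
  | impL {c Γ Δ φ ψ} : GLSeq c Γ (insert φ Δ) → GLSeq c (insert ψ Γ) Δ →
      GLSeq c (insert (.imp φ ψ) Γ) Δ
  | impR {c Γ Δ φ ψ} : GLSeq c (insert φ Γ) (insert ψ Δ) → GLSeq c Γ (insert (.imp φ ψ) Δ)
  | boxGL {c Γ φ} : GLSeq c (Γ ∪ Γ.image .box ∪ {.box φ}) {φ} → GLSeq c (Γ.image .box) {.box φ}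

/-- Proof trees of GLS_seq (cut included). -/
inductive GLSTree : SeqLevel → Finset Formula → Finset Formula → Type
  | init (lv φ) : GLSTree lv {φ} {φ}
  | initBot (lv) : GLSTree lv {Formula.bot} ∅
  | cut {lv Γ Δ} (φ) : GLSTree lv Γ (insert φ Δ) → GLSTree lv (insert φ Γ) Δ → GLSTree lv Γ Δ
  | weak {lv Γ Δ} (Γ' Δ' : Finset Formula) : Γ ⊆ Γ' → Δ ⊆ Δ' → GLSTree lv Γ Δ → GLSTree lv Γ' Δ'
  | impL {lv Γ Δ} (φ ψ) : GLSTree lv Γ (insert φ Δ) → GLSTree lv (insert ψ Γ) Δ →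
      GLSTree lv (insert (.imp φ ψ) Γ) Δ
  | impR {lv Γ Δ} (φ ψ) : GLSTree lv (insert φ Γ) (insert ψ Δ) → GLSTree lv Γ (insert (.imp φ ψ) Δ)
  | boxGL (Γ φ) : GLSTree .one (Γ ∪ Γ.image .box ∪ {.box φ}) {φ} → GLSTree .one (Γ.image .box) {.box φ}
  | boxL {Γ Δ} (φ) : GLSTree .two (insert φ Γ) Δ → GLSTree .two (insert (.box φ) Γ) Δ
  | lift {Γ Δ} : GLSTree .one Γ Δ → GLSTree .two Γ Δ

/-- The set of principal formulas of all (□L) rules occurring in a proof tree. -/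
def GLSTree.principals : ∀ {lv Γ Δ}, GLSTree lv Γ Δ → Finset Formula
  | _, _, _, .init _ _ => ∅
  | _, _, _, .initBot _ => ∅
  | _, _, _, .cut _ t₁ t₂ => t₁.principals ∪ t₂.principals
  | _, _, _, .weak _ _ _ _ t => t.principals
  | _, _, _, .impL _ _ t₁ t₂ => t₁.principals ∪ t₂.principals
  | _, _, _, .impR _ _ t => t.principals
  | _, _, _, .boxGL _ _ t => t.principals
  | _, _, _, .boxL φ t => insert (Formula.box φ) t.principals
  | _, _, _, .lift t => t.principals

/-- A proof tree bundled with its level and conclusion. -/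
abbrev PGLSTree : Type :=
  (lv : SeqLevel) × (Γ : Finset Formula) × (Δ : Finset Formula) × GLSTree lv Γ Δ

/-- The set of subproofs of a proof tree (including the tree itself). -/
def GLSTree.subproofs {lv Γ Δ} (t : GLSTree lv Γ Δ) : Set PGLSTree :=
  insert ⟨lv, Γ, Δ, t⟩ <|
    match lv, Γ, Δ, t with
    | _, _, _, .init _ _ => ∅
    | _, _, _, .initBot _ => ∅
    | _, _, _, .cut _ t₁ t₂ => t₁.subproofs ∪ t₂.subproofs
    | _, _, _, .weak _ _ _ _ t₁ => t₁.subproofs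
    | _, _, _, .impL _ _ t₁ t₂ => t₁.subproofs ∪ t₂.subproofs
    | _, _, _, .impR _ _ t₁ => t₁.subproofs
    | _, _, _, .boxGL _ _ t₁ => t₁.subproofs
    | _, _, _, .boxL _ t₁ => t₁.subproofs
    | _, _, _, .lift t₁ => t₁.subproofs

/-- Kripke satisfaction over a frame `R` with atomic valuation `v`. -/
def KSat {W : Type} (R : W → W → Prop) (v : W → ℕ → Prop) : Formula → W → Prop
  | .var p, w => v w p
  | .bot, _ => False
  | .imp φ ψ, w => KSat R v φ w → KSat R v ψ w
  | .box φ, w => ∀ w', R w w' → KSat R v φ w'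

/-- A GL-model: a nonempty, transitive, converse well-founded Kripke model. -/
structure GLModel where
  World : Type
  ne : Nonempty World
  R : World → World → Prop
  trans : Transitive R
  cwf : ∀ f : ℕ → World, ¬ ∀ i, R (f i) (f (i + 1))
  val : World → ℕ → Prop

/-- Truth of a formula at a world of a GL-model. -/
def GLModel.sat (M : GLModel) (w : M.World) (φ : Formula) : Prop := KSat M.R M.val φ w

/-- Truth of a sequent Γ ▸ Δ at a world: some γ ∈ Γ is false or some δ ∈ Δ is true. -/
def GLModel.seqTrue (M : GLModel) (w : M.World) (Γ Δ : Finset Formula) : Prop :=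
  (∃ γ ∈ Γ, ¬ M.sat w γ) ∨ (∃ δ ∈ Δ, M.sat w δ)

/-- w is Σ-reflexive: □α → α is true at w for every □α ∈ Σ. -/
def GLModel.reflexiveFor (M : GLModel) (w : M.World) (S : Finset Formula) : Prop :=
  ∀ α : Formula, Formula.box α ∈ S → M.sat w ((Formula.box α).imp α)

/-- Saturation conditions (→L), (→R) for first-level sequents. -/
def Saturated1 (Γ Δ : Finset Formula) : Prop :=
  (∀ φ ψ : Formula, φ.imp ψ ∈ Γ → φ ∈ Δ ∨ ψ ∈ Γ) ∧
  (∀ φ ψ : Formula, φ.imp ψ ∈ Δ → φ ∈ Γ ∧ ψ ∈ Δ)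

/-- Saturation for second-level sequents: additionally (□L). -/
def Saturated2 (Γ Δ : Finset Formula) : Prop :=
  Saturated1 Γ Δ ∧ ∀ φ : Formula, Formula.box φ ∈ Γ → φ ∈ Γ

def Saturated : SeqLevel → Finset Formula → Finset Formula → Prop
  | .one => Saturated1
  | .two => Saturated2

/-- The Hilbert system GL. -/
inductive GLHilbert : Formula → Prop
  | ax1 (φ ψ : Formula) : GLHilbert (φ.imp (ψ.imp φ))
  | ax2 (φ ψ χ : Formula) :
      GLHilbert ((φ.imp (ψ.imp χ)).imp ((φ.imp ψ).imp (φ.imp χ)))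
  | ax3 (φ : Formula) : GLHilbert (((φ.imp .bot).imp .bot).imp φ)
  | axK (φ ψ : Formula) :
      GLHilbert ((Formula.box (φ.imp ψ)).imp ((Formula.box φ).imp (Formula.box ψ)))
  | axLob (φ : Formula) :
      GLHilbert ((Formula.box ((Formula.box φ).imp φ)).imp (Formula.box φ))
  | mp {φ ψ} : GLHilbert (φ.imp ψ) → GLHilbert φ → GLHilbert ψ
  | nec {φ} : GLHilbert φ → GLHilbert (Formula.box φ)

/-- The Hilbert system GLS: theorems of GL and all □α → α, closed under modus ponens. -/
inductive GLSHilbert : Formula → Prop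
  | gl {φ} : GLHilbert φ → GLSHilbert φ
  | refl (α : Formula) : GLSHilbert ((Formula.box α).imp α)
  | mp {φ ψ} : GLSHilbert (φ.imp ψ) → GLSHilbert φ → GLSHilbert ψ

/-- Conjunction (encoded with → and ⊥) of a list of formulas; empty conjunction is ⊤. -/
def Formula.conj : List Formula → Formula
  | [] => Formula.bot.imp Formula.bot
  | φ :: l => ((φ.imp ((Formula.conj l).imp .bot)).imp .bot)

/-- Membership predicate for the canonical model: saturated first-level sequents over S
that are not cut-free provable in GLS_seq. -/
def W0pred (S : Finset Formula) (s : Finset Formula × Finset Formula) : Prop :=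
  Saturated1 s.1 s.2 ∧ ¬ GLSSeq false SeqLevel.one s.1 s.2 ∧ s.1 ∪ s.2 ⊆ S

/-- Worlds of the canonical model. -/
def W0 (S : Finset Formula) : Type := {s : Finset Formula × Finset Formula // W0pred S s}

/-- Accessibility of the canonical model: (Γ⇒Δ) R₀ (Γ'⇒Δ') iff Γ_□ ⊊ Γ'_□ and Γ_□ ⊆ Γ'. -/
def R0 (S : Finset Formula) (s t : W0 S) : Prop :=
  boxInv s.1.1 ⊂ boxInv t.1.1 ∧ boxInv s.1.1 ⊆ t.1.1

/-- Valuation of the canonical model: p is true at (Γ⇒Δ) iff p ∈ Γ. -/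
def V0 (S : Finset Formula) (s : W0 S) (p : ℕ) : Prop := Formula.var p ∈ s.1.1

/-- The extended set of worlds W = W₀ ∪ ℕ. -/
def Wext (S : Finset Formula) : Type := W0 S ⊕ ℕ

/-- The extended accessibility relation, with distinguished world `wp` in W₀. -/
def Rext (S : Finset Formula) (wp : W0 S) : Wext S → Wext S → Prop
  | Sum.inl x, Sum.inl y => R0 S x y
  | Sum.inr _, Sum.inl y => y = wp ∨ R0 S wp y
  | Sum.inr n, Sum.inr m => m < n
  | Sum.inl _, Sum.inr _ => False

/-- The extended valuation: worlds in ℕ behave like the distinguished world `wp`. -/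
def Vext (S : Finset Formula) (wp : W0 S) : Wext S → ℕ → Prop
  | Sum.inl x, p => V0 S x p
  | Sum.inr _, p => V0 S wp p
/-! ### Auxiliary development -/

namespace Aux

open Formula

/-- Negation. -/
def fneg (φ : Formula) : Formula := φ.imp .bot

/-- Provability from a finite set of hypotheses, over GL. -/
inductive Prv (Γ : Finset Formula) : Formula → Prop
  | thm {φ} : GLHilbert φ → Prv Γ φ
  | hyp {φ} : φ ∈ Γ → Prv Γ φ
  | mp {φ ψ} : Prv Γ (φ.imp ψ) → Prv Γ φ → Prv Γ ψ

theorem Prv.mono {Γ Γ' : Finset Formula} {φ} (h : Γ ⊆ Γ') (hp : Prv Γ φ) : Prv Γ' φ := by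
  induction hp with
  | thm h => exact .thm h
  | hyp hm => exact .hyp (h hm)
  | mp _ _ ih1 ih2 => exact .mp ih1 ih2

theorem glImpSelf (φ : Formula) : GLHilbert (φ.imp φ) := by
  have h1 := GLHilbert.ax2 φ (φ.imp φ) φ
  have h2 := GLHilbert.ax1 φ (φ.imp φ)
  have h3 := GLHilbert.ax1 φ φ
  exact (h1.mp h2).mp h3

theorem deduction {Γ : Finset Formula} {a φ : Formula}
    (h : Prv (insert a Γ) φ) : Prv Γ (a.imp φ) := by
  induction h with
  | thm h => exact .mp (.thm (GLHilbert.ax1 _ _)) (.thm h)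
  | hyp hm =>
    rcases Finset.mem_insert.mp hm with rfl | hm
    · exact .thm (glImpSelf _)
    · exact .mp (.thm (GLHilbert.ax1 _ _)) (.hyp hm)
  | mp _ _ ih1 ih2 => exact .mp (.mp (.thm (GLHilbert.ax2 _ _ _)) ih1) ih2

theorem Prv.of_empty {φ} (h : Prv ∅ φ) : GLHilbert φ := by
  induction h with
  | thm h => exact h
  | hyp hm => simp at hm
  | mp _ _ ih1 ih2 => exact ih1.mp ih2

/-- Proof by contradiction inside `Prv`. -/
theorem byContra {Γ : Finset Formula} {φ} (h : Prv (insert (fneg φ) Γ) .bot) : Prv Γ φ :=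
  .mp (.thm (GLHilbert.ax3 φ)) (deduction h)

theorem efq (φ : Formula) : GLHilbert (Formula.bot.imp φ) := by
  refine Prv.of_empty (deduction (byContra ?_))
  exact .hyp (by simp [fneg])

theorem Prv.botElim {Γ : Finset Formula} {φ} (h : Prv Γ .bot) : Prv Γ φ :=
  .mp (.thm (efq φ)) h

theorem impTrans {a b c : Formula} (h1 : GLHilbert (a.imp b)) (h2 : GLHilbert (b.imp c)) :
    GLHilbert (a.imp c) := by
  refine Prv.of_empty (deduction ?_)
  exact .mp (.thm h2) (.mp (.thm h1) (.hyp (by simp)))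

/-- `a → conj l → conj (a :: l)`. -/
theorem conjIntroThm (a : Formula) (l : List Formula) :
    GLHilbert (a.imp ((Formula.conj l).imp (Formula.conj (a :: l)))) := by
  refine Prv.of_empty (deduction (deduction (deduction ?_)))
  -- context: a, conj l, (a → (conj l → ⊥)); goal ⊥
  exact Prv.mp
    (Prv.mp (Prv.hyp (show a.imp ((Formula.conj l).imp .bot) ∈ _ by simp))
      (Prv.hyp (show a ∈ _ by simp)))
    (Prv.hyp (show Formula.conj l ∈ _ by simp))

/-- `(c → a → φ) → (conj (a::l) → φ)` where `c = conj l`. -/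
theorem conjElimStep (a φ : Formula) (l : List Formula) :
    GLHilbert (((Formula.conj l).imp (a.imp φ)).imp ((Formula.conj (a :: l)).imp φ)) := by
  refine Prv.of_empty (deduction (deduction (byContra ?_)))
  -- context: h1 : conj l → a → φ, h2 : conj (a::l) = ¬(a → ¬ conj l), hn : ¬φ ; goal ⊥
  have hstep : Prv (insert (fneg φ) (insert (Formula.conj (a :: l))
      {(Formula.conj l).imp (a.imp φ)})) (a.imp ((Formula.conj l).imp .bot)) := by
    refine deduction (deduction ?_)
    exact Prv.mp (Prv.hyp (show fneg φ ∈ _ by simp))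
      (Prv.mp
        (Prv.mp (Prv.hyp (show (Formula.conj l).imp (a.imp φ) ∈ _ by simp))
          (Prv.hyp (show Formula.conj l ∈ _ by simp)))
        (Prv.hyp (show a ∈ _ by simp)))
  exact Prv.mp (Prv.hyp (by simp [Formula.conj])) hstep

theorem prvConjImp {Γ : Finset Formula} {φ : Formula} :
    ∀ l : List Formula, Prv (l.foldr insert Γ) φ → Prv Γ ((Formula.conj l).imp φ)
  | [], h => .mp (.thm (GLHilbert.ax1 _ _)) h
  | a :: l, h => by
    have h1 : Prv Γ ((Formula.conj l).imp (a.imp φ)) :=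
      prvConjImp l (deduction h)
    exact .mp (.thm (conjElimStep a φ l)) h1

theorem boxMono {a b : Formula} (h : GLHilbert (a.imp b)) :
    GLHilbert ((Formula.box a).imp (Formula.box b)) :=
  (GLHilbert.axK a b).mp h.nec

/-- Pairwise conjunction. -/
def fand (a b : Formula) : Formula := (a.imp (b.imp .bot)).imp .bot

theorem andIntro (a b : Formula) : GLHilbert (a.imp (b.imp (fand a b))) := by
  refine Prv.of_empty (deduction (deduction (deduction ?_)))
  exact Prv.mp
    (Prv.mp (Prv.hyp (show a.imp (b.imp .bot) ∈ _ by simp)) (Prv.hyp (show a ∈ _ by simp)))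
    (Prv.hyp (show b ∈ _ by simp))

theorem andLeft (a b : Formula) : GLHilbert ((fand a b).imp a) := by
  refine Prv.of_empty (deduction (byContra ?_))
  refine Prv.mp (Prv.hyp (show fand a b ∈ _ by simp [fand])) (deduction ?_)
  exact Prv.botElim (Prv.mp (Prv.hyp (show fneg a ∈ _ by simp)) (Prv.hyp (show a ∈ _ by simp)))

theorem andRight (a b : Formula) : GLHilbert ((fand a b).imp b) := by
  refine Prv.of_empty (deduction (byContra ?_))
  refine Prv.mp (Prv.hyp (show fand a b ∈ _ by simp [fand])) (deduction (deduction ?_))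
  exact Prv.mp (Prv.hyp (show fneg b ∈ _ by simp)) (Prv.hyp (show b ∈ _ by simp))

/-- The transitivity axiom `□a → □□a` is a theorem of GL. -/
theorem four (p : Formula) : GLHilbert ((Formula.box p).imp (Formula.box (Formula.box p))) := by
  set ψ := fand p (Formula.box p) with hψ
  have h1 : GLHilbert (p.imp ((Formula.box ψ).imp ψ)) := by
    refine Prv.of_empty (deduction (deduction ?_))
    refine .mp (.mp (.thm (andIntro p (Formula.box p))) (.hyp (by simp))) ?_
    exact .mp (.thm (boxMono (andLeft p (Formula.box p)))) (.hyp (by simp [hψ]))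
  have h2 : GLHilbert ((Formula.box p).imp (Formula.box ((Formula.box ψ).imp ψ))) :=
    boxMono h1
  have h3 : GLHilbert ((Formula.box p).imp (Formula.box ψ)) :=
    impTrans h2 (GLHilbert.axLob ψ)
  exact impTrans h3 (boxMono (andRight p (Formula.box p)))

theorem boxConjList {Γ : Finset Formula} :
    ∀ l : List Formula, (∀ x ∈ l, Prv Γ (Formula.box x)) →
      Prv Γ (Formula.box (Formula.conj l))
  | [], _ => .thm (GLHilbert.nec (glImpSelf .bot))
  | a :: l, h => by
    have hc : Prv Γ (Formula.box (Formula.conj l)) :=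
      boxConjList l fun x hx => h x (List.mem_cons_of_mem a hx)
    have ha : Prv Γ (Formula.box a) := h a (List.mem_cons_self)
    have k1 : Prv Γ ((Formula.box a).imp
        (Formula.box ((Formula.conj l).imp (Formula.conj (a :: l))))) :=
      .thm ((GLHilbert.axK _ _).mp (GLHilbert.nec (conjIntroThm a l)))
    exact .mp (.mp (.thm (GLHilbert.axK _ _)) (.mp k1 ha)) hc

/-! #### Soundness of GL -/

theorem lob_sound (M : GLModel) (w : M.World) (φ : Formula)
    (h : M.sat w (Formula.box ((Formula.box φ).imp φ))) : M.sat w (Formula.box φ) := by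
  by_contra hn
  simp only [GLModel.sat, KSat] at hn h
  push_neg at hn
  obtain ⟨w1, hw1, hnw1⟩ := hn
  -- the set of bad successors
  let Bad := {u : M.World // M.R w u ∧ ¬ KSat M.R M.val φ u}
  have step : ∀ u : Bad, ∃ u' : Bad, M.R u.1 u'.1 := by
    rintro ⟨u, hRu, hφu⟩
    have h1 : KSat M.R M.val ((Formula.box φ).imp φ) u := h u hRu
    have h2 : ¬ KSat M.R M.val (Formula.box φ) u := fun hb => hφu (h1 hb)
    simp only [KSat] at h2
    push_neg at h2
    obtain ⟨u', hu', hφu'⟩ := h2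
    exact ⟨⟨u', M.trans hRu hu', hφu'⟩, hu'⟩
  choose f hf using step
  let g : ℕ → Bad := fun n => Nat.rec ⟨w1, hw1, hnw1⟩ (fun _ p => f p) n
  have : ∀ i, M.R ((fun n => (g n).1) i) ((fun n => (g n).1) (i + 1)) := fun i => hf (g i)
  exact M.cwf _ this

theorem gl_sound {φ : Formula} (h : GLHilbert φ) (M : GLModel) (w : M.World) : M.sat w φ := by
  induction h generalizing w with
  | ax1 a b => intro ha _; exact ha
  | ax2 a b c => intro h1 h2 h3; exact h1 h3 (h2 h3)
  | ax3 a => intro h1; by_contra hn; exact h1 fun ha => hn ha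
  | axK a b => intro h1 h2 w' hw'; exact h1 w' hw' (h2 w' hw')
  | axLob a => intro h1; exact lob_sound M w a h1
  | mp _ _ ih1 ih2 => exact ih1 w (ih2 w)
  | nec _ ih => intro w' _; exact ih w'

/-! #### The extension of a model by a descending ω-chain -/

/-- Accessibility on `M.World ⊕ ℕ` with distinguished world `wp`. -/
def extR (M : GLModel) (wp : M.World) : (M.World ⊕ ℕ) → (M.World ⊕ ℕ) → Prop
  | Sum.inl x, Sum.inl y => M.R x y
  | Sum.inr _, Sum.inl y => y = wp ∨ M.R wp y
  | Sum.inr n, Sum.inr m => m < n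
  | Sum.inl _, Sum.inr _ => False

def extV (M : GLModel) (wp : M.World) : (M.World ⊕ ℕ) → ℕ → Prop
  | Sum.inl x, p => M.val x p
  | Sum.inr _, p => M.val wp p

def extModel (M : GLModel) (wp : M.World) : GLModel where
  World := M.World ⊕ ℕ
  ne := ⟨Sum.inr 0⟩
  R := extR M wp
  trans := by
    rintro (x | n) (y | m) (z | k) hxy hyz <;>
        simp only [extR] at hxy hyz ⊢ <;>
      first
        | exact M.trans hxy hyz
        | exact hyz
        | omega
        | (rcases hxy with rfl | hxy
           · exact Or.inr hyz
           · exact Or.inr (M.trans hxy hyz))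
  cwf := by
    intro f hf
    by_cases hall : ∀ i, ∃ n, f i = Sum.inr n
    · choose g hg using hall
      have hdec : ∀ i, g (i + 1) < g i := by
        intro i
        have := hf i
        rw [hg i, hg (i + 1)] at this
        exact this
      have hle : ∀ i, g i + i ≤ g 0 := by
        intro i
        induction i with
        | zero => simp
        | succ n ih => have := hdec n; omega
      have := hle (g 0 + 1); omega
    · push_neg at hall
      obtain ⟨i0, hi0⟩ := hall
      have hinl : ∀ k, ∃ x, f (i0 + k) = Sum.inl x := by
        intro k
        induction k with
        | zero =>
          cases hx : f i0 with
          | inl x => exact ⟨x, rfl⟩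
          | inr n => exact absurd hx (hi0 n)
        | succ n ih =>
          obtain ⟨x, hx⟩ := ih
          have := hf (i0 + n)
          rw [hx] at this
          cases hy : f (i0 + n + 1) with
          | inl y => exact ⟨y, by rw [← hy]⟩
          | inr m => rw [hy] at this; exact absurd this (by simp [extR])
      choose g hg using hinl
      refine M.cwf g fun i => ?_
      have := hf (i0 + i)
      rw [hg i, show i0 + i + 1 = i0 + (i + 1) by ring, hg (i + 1)] at this
      exact this
  val := extV M wp

/-- Truth at an old world is unchanged in the extended model. -/
theorem extSat (M : GLModel) (wp : M.World) :
    ∀ (ψ : Formula) (x : M.World),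
      KSat (extR M wp) (extV M wp) ψ (Sum.inl x) ↔ KSat M.R M.val ψ x := by
  intro ψ
  induction ψ with
  | var p => intro x; rfl
  | bot => intro x; rfl
  | imp a b iha ihb => intro x; simp only [KSat]; rw [iha, ihb]
  | box a ih =>
    intro x
    simp only [KSat]
    constructor
    · intro h y hy
      exact (ih y).mp (h (Sum.inl y) hy)
    · rintro h (y | n) hy
      · exact (ih y).mpr (h y hy)
      · exact absurd hy (by simp [extR])

/-- □-truth along the chain is antitone. -/
theorem extBoxAntitone (M : GLModel) (wp : M.World) (α : Formula) {n m : ℕ} (h : n ≤ m)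
    (hm : KSat (extR M wp) (extV M wp) (Formula.box α) (Sum.inr m)) :
    KSat (extR M wp) (extV M wp) (Formula.box α) (Sum.inr n) := by
  rintro (y | k) hy
  · exact hm (Sum.inl y) hy
  · exact hm (Sum.inr k) (by simp only [extR] at hy ⊢; omega)

/-! #### Subformulas -/

theorem subf_self (φ : Formula) : φ ∈ φ.subf := by
  cases φ <;> simp [Formula.subf]

theorem subf_imp_left (a b : Formula) : a.subf ⊆ (Formula.imp a b).subf := by
  show a.subf ⊆ insert (Formula.imp a b) (a.subf ∪ b.subf)
  exact Finset.subset_union_left.trans (Finset.subset_insert _ _)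

theorem subf_imp_right (a b : Formula) : b.subf ⊆ (Formula.imp a b).subf := by
  show b.subf ⊆ insert (Formula.imp a b) (a.subf ∪ b.subf)
  exact Finset.subset_union_right.trans (Finset.subset_insert _ _)

theorem subf_box (a : Formula) : a.subf ⊆ (Formula.box a).subf := by
  show a.subf ⊆ insert (Formula.box a) a.subf
  exact Finset.subset_insert _ _

theorem subf_closed : ∀ {φ ψ : Formula}, ψ ∈ φ.subf → ψ.subf ⊆ φ.subf := by
  intro φ
  induction φ with
  | var p => intro ψ h; simp [Formula.subf] at h; subst h; simp [Formula.subf]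
  | bot => intro ψ h; simp [Formula.subf] at h; subst h; simp [Formula.subf]
  | imp a b iha ihb =>
    intro ψ h
    rcases Finset.mem_insert.mp h with rfl | h
    · exact subset_refl _
    · rcases Finset.mem_union.mp h with h | h
      · exact (iha h).trans (subf_imp_left a b)
      · exact (ihb h).trans (subf_imp_right a b)
  | box a ih =>
    intro ψ h
    rcases Finset.mem_insert.mp h with rfl | h
    · exact subset_refl _
    · exact (ih h).trans (subf_box a)

theorem box_mem_subf {φ α : Formula} (h : Formula.box α ∈ φ.subf) : α ∈ φ.subf :=
  subf_closed h (by simp [Formula.subf, subf_self])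

theorem imp_mem_subf {φ a b : Formula} (h : Formula.imp a b ∈ φ.subf) :
    a ∈ φ.subf ∧ b ∈ φ.subf :=
  ⟨subf_closed h (by simp [Formula.subf, subf_self]),
   subf_closed h (by simp [Formula.subf, subf_self])⟩

/-! #### Conjunctions and Kripke satisfaction -/

theorem conj_sat_elim {W : Type} (R : W → W → Prop) (v : W → ℕ → Prop) (w : W) :
    ∀ l : List Formula, KSat R v (Formula.conj l) w → ∀ x ∈ l, KSat R v x w := by
  intro l
  induction l with
  | nil => intro _ x hx; simp at hx
  | cons a l ih =>
    intro h x hx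
    have h2 : ¬ (KSat R v a w → KSat R v (Formula.conj l) w → False) := h
    rcases List.mem_cons.mp hx with rfl | hx
    · by_contra hna
      exact h2 fun ha _ => hna ha
    · refine ih ?_ x hx
      by_contra hnc
      exact h2 fun _ hc => hnc hc

/-! #### GLS soundness along the chain -/

theorem gls_eventually (M : GLModel) (wp : M.World) {ψ : Formula} (h : GLSHilbert ψ) :
    ∃ N, ∀ n ≥ N, KSat (extR M wp) (extV M wp) ψ (Sum.inr n) := by
  induction h with
  | gl h =>
    exact ⟨0, fun n _ => gl_sound h (extModel M wp) (Sum.inr n)⟩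
  | refl α =>
    by_cases hb : ∀ n, KSat (extR M wp) (extV M wp) (Formula.box α) (Sum.inr n)
    · refine ⟨0, fun n _ hbox => ?_⟩
      exact hb (n + 1) (Sum.inr n) (by simp [extR])
    · push_neg at hb
      obtain ⟨N, hN⟩ := hb
      refine ⟨N, fun n hn hbox => ?_⟩
      exact absurd (extBoxAntitone M wp α hn hbox) hN
  | mp _ _ ih1 ih2 =>
    obtain ⟨N1, h1⟩ := ih1
    obtain ⟨N2, h2⟩ := ih2
    exact ⟨max N1 N2, fun n hn =>
      h1 n (le_trans (le_max_left _ _) hn) (h2 n (le_trans (le_max_right _ _) hn))⟩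

/-- If `wp` satisfies □α→α for every □α ∈ SF(φ), then every subformula of φ has the
same truth value at every chain world as at `wp`. -/
theorem chain_invariance (M : GLModel) (wp : M.World) (φ : Formula)
    (hrefl : ∀ α, Formula.box α ∈ φ.subf → M.sat wp ((Formula.box α).imp α)) :
    ∀ ψ, ψ ∈ φ.subf → ∀ n, (KSat (extR M wp) (extV M wp) ψ (Sum.inr n) ↔ M.sat wp ψ) := by
  intro ψ
  induction ψ with
  | var p => intro _ n; exact Iff.rfl
  | bot => intro _ n; exact Iff.rfl
  | imp a b iha ihb =>
    intro h n
    obtain ⟨ha, hb⟩ := imp_mem_subf h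
    simp only [KSat]
    rw [iha ha n, ihb hb n]
    exact Iff.rfl
  | box α ih =>
    intro h n
    have hα : α ∈ φ.subf := box_mem_subf h
    constructor
    · intro hbox y hy
      exact (extSat M wp α y).mp (hbox (Sum.inl y) (Or.inr hy))
    · intro hbox
      have hsatα : M.sat wp α := hrefl α h hbox
      rintro (y | m) hy
      · rcases hy with h | hy
        · subst h; exact (extSat M y α y).mpr hsatα
        · exact (extSat M wp α y).mpr (hbox y hy)
      · exact (ih hα m).mpr hsatα

/-! #### Lindenbaum lemma (finite) -/

theorem consistent_or {C : Finset Formula} (h : ¬ Prv C .bot) (a : Formula) :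
    ¬ Prv (insert a C) .bot ∨ ¬ Prv (insert (fneg a) C) .bot := by
  by_contra hb
  push_neg at hb
  obtain ⟨h1, h2⟩ := hb
  have d1 : Prv C (a.imp .bot) := deduction h1
  have d2 : Prv C ((fneg a).imp .bot) := deduction h2
  have d3 : Prv C a := .mp (.thm (GLHilbert.ax3 a)) d2
  exact h (.mp d1 d3)

theorem lindenbaum (Φ : Finset Formula) : ∀ C : Finset Formula, ¬ Prv C .bot →
    ∃ X, X ⊆ Φ ∧ ¬ Prv (C ∪ (X ∪ (Φ \ X).image fneg)) .bot := by
  induction Φ using Finset.induction_on with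
  | empty => intro C hC; exact ⟨∅, by simp, by simpa using hC⟩
  | @insert a Φ' ha ih =>
    intro C hC
    rcases consistent_or hC a with h1 | h1
    · obtain ⟨X, hX, hcons⟩ := ih (insert a C) h1
      refine ⟨insert a X, Finset.insert_subset_insert _ hX, fun hbad => hcons ?_⟩
      have hd : (insert a Φ') \ (insert a X) = Φ' \ X := by
        ext b
        simp only [Finset.mem_sdiff, Finset.mem_insert, not_or]
        constructor
        · rintro ⟨hb1 | hb1, hb2, hb3⟩
          · exact absurd hb1 hb2
          · exact ⟨hb1, hb3⟩
        · rintro ⟨hb1, hb2⟩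
          exact ⟨Or.inr hb1, fun hba => ha (hba ▸ hb1), hb2⟩
      have hEq : C ∪ (insert a X ∪ ((insert a Φ') \ (insert a X)).image fneg)
          = insert a C ∪ (X ∪ (Φ' \ X).image fneg) := by
        rw [hd]
        ext b
        simp only [Finset.mem_union, Finset.mem_insert]
        tauto
      exact hEq ▸ hbad
    · obtain ⟨X, hX, hcons⟩ := ih (insert (fneg a) C) h1
      refine ⟨X, hX.trans (Finset.subset_insert _ _), fun hbad => hcons ?_⟩
      have haX : a ∉ X := fun h => ha (hX h)
      have hd : (insert a Φ') \ X = insert a (Φ' \ X) := by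
        ext b
        simp only [Finset.mem_sdiff, Finset.mem_insert]
        constructor
        · rintro ⟨hb1 | hb1, hb2⟩
          · exact Or.inl hb1
          · exact Or.inr ⟨hb1, hb2⟩
        · rintro (rfl | ⟨hb1, hb2⟩)
          · exact ⟨Or.inl rfl, haX⟩
          · exact ⟨Or.inr hb1, hb2⟩
      have hEq : C ∪ (X ∪ ((insert a Φ') \ X).image fneg)
          = insert (fneg a) C ∪ (X ∪ (Φ' \ X).image fneg) := by
        rw [hd, Finset.image_insert]
        ext b
        simp only [Finset.mem_union, Finset.mem_insert]
        tauto
      exact hEq ▸ hbad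

/-! #### The canonical model for GL -/

/-- The "theory" of a world candidate `X` over the fragment `Φ`. -/
def thSet (Φ X : Finset Formula) : Finset Formula := X ∪ (Φ \ X).image fneg

/-- Worlds of the canonical model over `Φ`. -/
def CW (Φ : Finset Formula) : Type :=
  {X : Finset Formula // X ⊆ Φ ∧ ¬ Prv (thSet Φ X) .bot}

/-- Accessibility of the canonical model. -/
def CR (Φ : Finset Formula) (X Y : CW Φ) : Prop :=
  (∀ β, Formula.box β ∈ X.1 → Formula.box β ∈ Y.1 ∧ β ∈ Y.1) ∧
  ∃ β, Formula.box β ∈ Y.1 ∧ Formula.box β ∉ X.1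

theorem mem_thSet {Φ X : Finset Formula} {ψ} (h : ψ ∈ X) : ψ ∈ thSet Φ X :=
  Finset.mem_union_left _ h

theorem neg_mem_thSet {Φ X : Finset Formula} {ψ} (h1 : ψ ∈ Φ) (h2 : ψ ∉ X) :
    fneg ψ ∈ thSet Φ X :=
  Finset.mem_union_right _ (Finset.mem_image_of_mem _ (Finset.mem_sdiff.mpr ⟨h1, h2⟩))

theorem world_mem_of_prv {Φ : Finset Formula} (X : CW Φ) {ψ} (h1 : ψ ∈ Φ)
    (h2 : Prv (thSet Φ X.1) ψ) : ψ ∈ X.1 := by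
  by_contra hn
  exact X.2.2 (.mp (.hyp (neg_mem_thSet h1 hn)) h2)

theorem isBox_eq {ψ : Formula} (h : ψ.isBox = true) : ψ = Formula.box ψ.unbox := by
  cases ψ <;> simp [Formula.isBox, Formula.unbox] at h ⊢

theorem mem_boxInv {Θ : Finset Formula} {β : Formula} :
    β ∈ boxInv Θ ↔ Formula.box β ∈ Θ := by
  constructor
  · intro h
    obtain ⟨ψ, hψ, heq⟩ := Finset.mem_image.mp h
    obtain ⟨hmem, hbox⟩ := Finset.mem_filter.mp hψ
    rw [← heq, ← isBox_eq hbox]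
    exact hmem
  · intro h
    exact Finset.mem_image.mpr ⟨Formula.box β,
      Finset.mem_filter.mpr ⟨h, by simp [Formula.isBox]⟩, rfl⟩

theorem subset_foldr (l : List Formula) (Γ : Finset Formula) :
    ∀ x, (x ∈ l ∨ x ∈ Γ) → x ∈ l.foldr insert Γ := by
  induction l with
  | nil =>
    rintro x (h | h)
    · simp at h
    · exact h
  | cons a l ih =>
    intro x h
    show x ∈ insert a (l.foldr insert Γ)
    rcases h with h | h
    · rcases List.mem_cons.mp h with rfl | h
      · exact Finset.mem_insert_self _ _
      · exact Finset.mem_insert_of_mem (ih x (Or.inl h))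
    · exact Finset.mem_insert_of_mem (ih x (Or.inr h))

/-- The key extension lemma for the □-case of the truth lemma. -/
theorem box_extension {Φ : Finset Formula} (hcl : ∀ {ψ}, ψ ∈ Φ → ψ.subf ⊆ Φ)
    (X : CW Φ) {α : Formula} (hboxΦ : Formula.box α ∈ Φ) (hnot : Formula.box α ∉ X.1) :
    ∃ Y : CW Φ, CR Φ X Y ∧ α ∉ Y.1 := by
  classical
  set U := boxInv X.1 with hU
  set S := U.image Formula.box ∪ U with hS
  set C := insert (fneg α) (insert (Formula.box α) S) with hC
  -- C is consistent
  have hCcons : ¬ Prv C .bot := by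
    intro hPC
    have d1 : Prv (insert (Formula.box α) S) ((fneg α).imp .bot) := deduction hPC
    have d2 : Prv (insert (Formula.box α) S) α := .mp (.thm (GLHilbert.ax3 α)) d1
    have d3 : Prv S ((Formula.box α).imp α) := deduction d2
    have d4 : Prv (S.toList.foldr insert ∅) ((Formula.box α).imp α) :=
      d3.mono fun x hx => subset_foldr _ _ x (Or.inl (Finset.mem_toList.mpr hx))
    have d5 : GLHilbert ((Formula.conj S.toList).imp ((Formula.box α).imp α)) :=
      (prvConjImp S.toList d4).of_empty
    have d7 : GLHilbert ((Formula.box (Formula.conj S.toList)).imp (Formula.box α)) :=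
      impTrans (boxMono d5) (GLHilbert.axLob α)
    have hbx : ∀ x ∈ S.toList, Prv (thSet Φ X.1) (Formula.box x) := by
      intro x hx
      rcases Finset.mem_union.mp (Finset.mem_toList.mp hx) with hx | hx
      · obtain ⟨β, hβ, rfl⟩ := Finset.mem_image.mp hx
        exact .mp (.thm (four β)) (.hyp (mem_thSet (mem_boxInv.mp hβ)))
      · exact .hyp (mem_thSet (mem_boxInv.mp hx))
    have dα : Prv (thSet Φ X.1) (Formula.box α) :=
      .mp (.thm d7) (boxConjList S.toList hbx)
    exact X.2.2 (.mp (.hyp (neg_mem_thSet hboxΦ hnot)) dα)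
  obtain ⟨Y, hYΦ, hYcons⟩ := lindenbaum Φ C hCcons
  have hth : thSet Φ Y ⊆ C ∪ (Y ∪ (Φ \ Y).image fneg) := Finset.subset_union_right
  refine ⟨⟨Y, hYΦ, fun h => hYcons (h.mono hth)⟩, ?_, ?_⟩
  · -- CR X Y
    have memY : ∀ ψ ∈ C, ψ ∈ Φ → ψ ∈ Y := by
      intro ψ hψC hψΦ
      by_contra hn
      refine hYcons (Prv.mp (Prv.hyp (show fneg ψ ∈ _ from ?_)) (Prv.hyp (show ψ ∈ _ from ?_)))
      · exact Finset.mem_union_right _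
          (Finset.mem_union_right _
            (Finset.mem_image_of_mem _ (Finset.mem_sdiff.mpr ⟨hψΦ, hn⟩)))
      · exact Finset.mem_union_left _ hψC
    constructor
    · intro β hβX
      have hβU : β ∈ U := mem_boxInv.mpr hβX
      have hbC : Formula.box β ∈ C := by
        rw [hC]
        exact Finset.mem_insert_of_mem (Finset.mem_insert_of_mem
          (Finset.mem_union_left _ (Finset.mem_image_of_mem _ hβU)))
      have hβC : β ∈ C := by
        rw [hC]
        exact Finset.mem_insert_of_mem (Finset.mem_insert_of_mem
          (Finset.mem_union_right _ hβU))
      have hbΦ : Formula.box β ∈ Φ := X.2.1 hβX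
      exact ⟨memY _ hbC hbΦ, memY _ hβC (hcl hbΦ (subf_box β (subf_self β)))⟩
    · refine ⟨α, memY _ ?_ hboxΦ, hnot⟩
      rw [hC]
      exact Finset.mem_insert_of_mem (Finset.mem_insert_self _ _)
  · -- α ∉ Y
    intro hαY
    refine hYcons (Prv.mp (Prv.hyp (show fneg α ∈ _ from ?_)) (Prv.hyp (show α ∈ _ from ?_)))
    · exact Finset.mem_union_left _ (by rw [hC]; exact Finset.mem_insert_self _ _)
    · exact Finset.mem_union_right _ (Finset.mem_union_left _ hαY)

/-- The canonical model over the fragment `Φ`, given some world. -/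
def canModel (Φ : Finset Formula) (w0 : CW Φ) : GLModel where
  World := CW Φ
  ne := ⟨w0⟩
  R := CR Φ
  trans := by
    rintro X Y Z ⟨h1, _⟩ ⟨h2, β, hβ1, hβ2⟩
    refine ⟨fun γ hγ => ⟨(h2 γ (h1 γ hγ).1).1, (h2 γ (h1 γ hγ).1).2⟩, β, hβ1, fun hc => hβ2 (h1 β hc).1⟩
  cwf := by
    intro f hf
    classical
    let c : ℕ → ℕ := fun n => ((f n).1.filter (fun ψ => ψ.isBox)).card
    have hlt : ∀ n, c n < c (n + 1) := by
      intro n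
      obtain ⟨h1, β, hβ1, hβ2⟩ := hf n
      refine Finset.card_lt_card ⟨fun ψ hψ => ?_, fun hsub => ?_⟩
      · obtain ⟨hmem, hbox⟩ := Finset.mem_filter.mp hψ
        refine Finset.mem_filter.mpr ⟨?_, hbox⟩
        rw [isBox_eq hbox] at hmem ⊢
        exact (h1 _ hmem).1
      · exact hβ2 (Finset.mem_filter.mp
          (hsub (Finset.mem_filter.mpr ⟨hβ1, by simp [Formula.isBox]⟩))).1
    have hub : ∀ n, c n ≤ Φ.card :=
      fun n => Finset.card_le_card ((Finset.filter_subset _ _).trans (f n).2.1)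
    have hmono : ∀ n, n ≤ c n := by
      intro n
      induction n with
      | zero => exact Nat.zero_le _
      | succ m ih => have := hlt m; omega
    have := hmono (Φ.card + 1)
    have := hub (Φ.card + 1)
    omega
  val := fun X p => Formula.var p ∈ X.1

/-- The truth lemma. -/
theorem truth_lemma {Φ : Finset Formula} (hcl : ∀ {ψ}, ψ ∈ Φ → ψ.subf ⊆ Φ) (w0 : CW Φ) :
    ∀ ψ, ψ ∈ Φ → ∀ X : CW Φ, ((canModel Φ w0).sat X ψ ↔ ψ ∈ X.1) := by
  intro ψ
  induction ψ with
  | var p => intro _ X; exact Iff.rfl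
  | bot =>
    intro hΦ X
    constructor
    · exact fun h => absurd h (by exact fun h => h)
    · intro hb
      exact absurd (Prv.hyp (mem_thSet (Φ := Φ) hb)) X.2.2
  | imp a b iha ihb =>
    intro hΦ X
    have haΦ : a ∈ Φ := hcl hΦ (subf_imp_left a b (subf_self a))
    have hbΦ : b ∈ Φ := hcl hΦ (subf_imp_right a b (subf_self b))
    have hKs : (canModel Φ w0).sat X (a.imp b) ↔
        ((canModel Φ w0).sat X a → (canModel Φ w0).sat X b) := Iff.rfl
    rw [hKs, iha haΦ X, ihb hbΦ X]
    constructor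
    · intro h
      refine world_mem_of_prv X hΦ ?_
      by_cases haX : a ∈ X.1
      · exact .mp (.thm (GLHilbert.ax1 b a)) (.hyp (mem_thSet (h haX)))
      · refine deduction (Prv.botElim
          (Prv.mp (Prv.hyp (show fneg a ∈ _ from ?_)) (Prv.hyp (show a ∈ _ from ?_))))
        · exact Finset.mem_insert_of_mem (neg_mem_thSet haΦ haX)
        · exact Finset.mem_insert_self _ _
    · intro him haX
      exact world_mem_of_prv X hbΦ (.mp (.hyp (mem_thSet him)) (.hyp (mem_thSet haX)))
  | box α ih =>
    intro hΦ X
    have hαΦ : α ∈ Φ := hcl hΦ (subf_box α (subf_self α))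
    constructor
    · intro hsat
      by_contra hnot
      obtain ⟨Y, hRY, hαY⟩ := box_extension hcl X hΦ hnot
      exact hαY ((ih hαΦ Y).mp (hsat Y hRY))
    · intro hmem Y hRY
      exact (ih hαΦ Y).mpr (hRY.1 α hmem).2

/-- Weak completeness of GL. -/
theorem gl_complete {χ : Formula} (h : ¬ GLHilbert χ) :
    ∃ (M : GLModel) (w : M.World), ¬ M.sat w χ := by
  classical
  set Φ := χ.subf with hΦ
  have hcl : ∀ {ψ}, ψ ∈ Φ → ψ.subf ⊆ Φ := fun hψ => subf_closed hψ
  have hroot : ¬ Prv ({fneg χ} : Finset Formula) .bot := by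
    intro hP
    have d1 : Prv ∅ ((fneg χ).imp .bot) := deduction (by simpa using hP)
    exact h ((Prv.mp (.thm (GLHilbert.ax3 χ)) d1).of_empty)
  obtain ⟨Y, hYΦ, hYcons⟩ := lindenbaum Φ {fneg χ} hroot
  have hth : thSet Φ Y ⊆ {fneg χ} ∪ (Y ∪ (Φ \ Y).image fneg) := Finset.subset_union_right
  let w0 : CW Φ := ⟨Y, hYΦ, fun hc => hYcons (hc.mono hth)⟩
  have hχY : χ ∉ Y := by
    intro hc
    refine hYcons (Prv.mp (Prv.hyp (show fneg χ ∈ _ from ?_)) (Prv.hyp (show χ ∈ _ from ?_)))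
    · exact Finset.mem_union_left _ (Finset.mem_singleton_self _)
    · exact Finset.mem_union_right _ (Finset.mem_union_left _ hc)
  refine ⟨canModel Φ w0, w0, fun hsat => hχY ?_⟩
  exact (truth_lemma hcl w0 χ (subf_self χ) w0).mp hsat

theorem gls_conj : ∀ l : List Formula, (∀ x ∈ l, GLSHilbert x) →
    GLSHilbert (Formula.conj l)
  | [], _ => .gl (glImpSelf .bot)
  | a :: l, h =>
    .mp (.mp (.gl (conjIntroThm a l)) (h a (List.mem_cons_self)))
      (gls_conj l fun x hx => h x (List.mem_cons_of_mem a hx))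

end Aux

/-- φ is a theorem of GLS iff (⋀{□α→α : □α ∈ SF(φ)}) → φ is a theorem of GL,
where the antecedent is the conjunction of all □α → α with □α a subformula of φ
(given by any list enumerating exactly these formulas). -/
theorem glsHilbert_iff_glHilbert_reflexive_antecedent (φ : Formula) (l : List Formula)
    (hl : ∀ ψ : Formula, ψ ∈ l ↔ ∃ α : Formula,
        Formula.box α ∈ φ.subf ∧ ψ = (Formula.box α).imp α) :
    GLSHilbert φ ↔ GLHilbert ((Formula.conj l).imp φ) := by
  constructor
  · intro hGLS
    by_contra hn
    obtain ⟨M, w, hsat⟩ := Aux.gl_complete hn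
    have hsat' : ¬ (KSat M.R M.val (Formula.conj l) w → KSat M.R M.val φ w) := hsat
    rw [Classical.not_imp] at hsat'
    obtain ⟨hc, hnφ⟩ := hsat'
    have hrefl : ∀ α, Formula.box α ∈ φ.subf → M.sat w ((Formula.box α).imp α) :=
      fun α hα => Aux.conj_sat_elim M.R M.val w l hc _ ((hl _).mpr ⟨α, hα, rfl⟩)
    obtain ⟨N, hN⟩ := Aux.gls_eventually M w hGLS
    exact hnφ ((Aux.chain_invariance M w φ hrefl φ (Aux.subf_self φ) N).mp (hN N le_rfl))
  · intro h
    refine GLSHilbert.mp (.gl h) (Aux.gls_conj l fun x hx => ?_)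
    obtain ⟨α, _, rfl⟩ := (hl x).mp hx
    exact GLSHilbert.refl α
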